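/- Let F : ℝ → [0,1] be nondecreasing, let (a_n), (b_n) be real sequences with a_n > 0 such that for every x ∈ ℝ, lim_n F(a_n x + b_n)^n = Λ(x). If (a'_n), (b'_n) are real sequences with a'_n > 0, lim_n a_n/a'_n = 1 and lim_n (b_n − b'_n)/a_n = 0, then for every x ∈ ℝ, lim_n F(a'_n x + b'_n)^n = Λ(x). (Property 2: the sequences (a'_n) and (b'_n) are also norming constants for F.) -/

import Mathlib

open Filter Set

/-- Property 2: if `F(a_n x + b_n)^n → Λ(x)` for every `x`, `a_n/a'_n → 1` and
`(b_n - b'_n)/a_n → 0`, then also `F(a'_n x + b'_n)^n → Λ(x)` for every `x`;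
that is, `(a'_n)` and `(b'_n)` are also norming constants for `F`. -/
theorem stmt_14 (F : ℝ → ℝ) (hF01 : ∀ x, F x ∈ Set.Icc (0 : ℝ) 1) (hFmono : Monotone F)
    (a b a' b' : ℕ → ℝ) (ha : ∀ n, 0 < a n) (ha' : ∀ n, 0 < a' n)
    (hconv : ∀ x : ℝ,
      Tendsto (fun n : ℕ => F (a n * x + b n) ^ n) atTop
        (nhds (Real.exp (-Real.exp (-x)))))
    (hratio : Tendsto (fun n => a n / a' n) atTop (nhds 1))
    (hdiff : Tendsto (fun n => (b n - b' n) / a n) atTop (nhds 0)) :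
    ∀ x : ℝ,
      Tendsto (fun n : ℕ => F (a' n * x + b' n) ^ n) atTop
        (nhds (Real.exp (-Real.exp (-x)))) := by
  intro x
  set g : ℝ → ℝ := fun y => Real.exp (-Real.exp (-y)) with hg
  have hgc : Continuous g := by fun_prop
  set c : ℕ → ℝ := fun n => (a' n / a n) * x + (b' n - b n) / a n with hc
  have heq : ∀ n, a' n * x + b' n = a n * c n + b n := by
    intro n
    have hne : a n ≠ 0 := (ha n).ne'
    simp only [hc]
    field_simp
    ring
  have hctend : Tendsto c atTop (nhds x) := by
    have h1 : Tendsto (fun n => a' n / a n) atTop (nhds 1) := by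
      have := hratio.inv₀ one_ne_zero
      simpa using this
    have h2 : Tendsto (fun n => (b' n - b n) / a n) atTop (nhds 0) := by
      have h := hdiff.neg
      have : (fun n => (b' n - b n) / a n) = fun n => -((b n - b' n) / a n) := by
        funext n; ring
      rw [this]; simpa using h
    have := (h1.mul_const x).add h2
    simpa using this
  have hmono : ∀ (n : ℕ) {y z : ℝ}, y ≤ z →
      F (a n * y + b n) ^ n ≤ F (a n * z + b n) ^ n := by
    intro n y z hyz
    have h1 : a n * y + b n ≤ a n * z + b n := by
      have := mul_le_mul_of_nonneg_left hyz (ha n).le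
      linarith
    exact pow_le_pow_left₀ (hF01 _).1 (hFmono h1) n
  rw [tendsto_order]
  constructor
  · intro l hl
    have hev : ∀ᶠ y in nhds x, l < g y := hgc.continuousAt.eventually (eventually_gt_nhds hl)
    obtain ⟨u, v, hx, hsub⟩ := mem_nhds_iff_exists_Ioo_subset.1 hev
    set y := (u + x) / 2 with hy
    have hyx : y < x := by
      have := hx.1
      simp only [hy]; linarith
    have hyIoo : y ∈ Set.Ioo u v := by
      constructor
      · have := hx.1; simp only [hy]; linarith
      · have := hx.2; simp only [hy]; linarith
    have hly : l < g y := hsub hyIoo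
    have h1 : ∀ᶠ n in atTop, y ≤ c n :=
      (hctend.eventually (eventually_ge_nhds hyx)).mono fun n h => h
    have h2 : ∀ᶠ n in atTop, l < F (a n * y + b n) ^ n :=
      (hconv y).eventually (eventually_gt_nhds hly)
    filter_upwards [h1, h2] with n hn1 hn2
    calc l < F (a n * y + b n) ^ n := hn2
      _ ≤ F (a n * c n + b n) ^ n := hmono n hn1
      _ = F (a' n * x + b' n) ^ n := by rw [heq n]
  · intro l hl
    have hev : ∀ᶠ y in nhds x, g y < l := hgc.continuousAt.eventually (eventually_lt_nhds hl)
    obtain ⟨u, v, hx, hsub⟩ := mem_nhds_iff_exists_Ioo_subset.1 hev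
    set y := (x + v) / 2 with hy
    have hyx : x < y := by
      have := hx.2
      simp only [hy]; linarith
    have hyIoo : y ∈ Set.Ioo u v := by
      constructor
      · have := hx.1; simp only [hy]; linarith
      · have := hx.2; simp only [hy]; linarith
    have hly : g y < l := hsub hyIoo
    have h1 : ∀ᶠ n in atTop, c n ≤ y :=
      (hctend.eventually (eventually_le_nhds hyx)).mono fun n h => h
    have h2 : ∀ᶠ n in atTop, F (a n * y + b n) ^ n < l :=
      (hconv y).eventually (eventually_lt_nhds hly)
    filter_upwards [h1, h2] with n hn1 hn2
    calc F (a' n * x + b' n) ^ n = F (a n * c n + b n) ^ n := by rw [heq n]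
      _ ≤ F (a n * y + b n) ^ n := hmono n hn1
      _ < l := hn2
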